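/- Let d, B, b be real numbers with d ≥ 1, B ≥ 2, and b ≥ B. Set ψ = d^{1/(B−1)} and δ = 4·e·ψ·(1 − 1/b) − 1, where e is Euler's number. Then ( e^δ / (1+δ)^{1+δ} )^{b/(4eψ)} ≤ 1/(2d). -/

import Mathlib

/-- The Chernoff-tail computation of Lemma 8 of the paper (unknown parameters). -/
theorem chernoff_tail_unknown (d B b : ℝ) (hd : 1 ≤ d) (hB : 2 ≤ B) (hb : B ≤ b)
    (ψ δ : ℝ) (hψ : ψ = d ^ (1 / (B - 1)))
    (hδ : δ = 4 * Real.exp 1 * ψ * (1 - 1 / b) - 1) :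
    (Real.exp δ / (1 + δ) ^ (1 + δ)) ^ (b / (4 * Real.exp 1 * ψ)) ≤ 1 / (2 * d) := by
  have hE : (0:ℝ) < Real.exp 1 := Real.exp_pos 1
  have hd0 : (0:ℝ) < d := by linarith
  have hB1 : (0:ℝ) < B - 1 := by linarith
  have hψ1 : (1:ℝ) ≤ ψ := by
    rw [hψ]
    apply Real.one_le_rpow hd
    positivity
  have hψ0 : (0:ℝ) < ψ := by linarith
  have hb2 : (2:ℝ) ≤ b := by linarith
  have hb0 : (0:ℝ) < b := by linarith
  have h1b : (1:ℝ)/2 ≤ 1 - 1/b := by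
    have : 1/b ≤ 1/2 := by
      apply div_le_div_of_nonneg_left <;> linarith
    linarith
  have h1b0 : (0:ℝ) < 1 - 1/b := by linarith
  have h1δ : 1 + δ = 4 * Real.exp 1 * ψ * (1 - 1/b) := by rw [hδ]; ring
  have hδpos : (0:ℝ) < 1 + δ := by rw [h1δ]; positivity
  set L : ℝ := Real.log (1 + δ) with hL
  set t : ℝ := b / (4 * Real.exp 1 * ψ) with ht_def
  have ht0 : 0 < t := by positivity
  have htδ : t * (1 + δ) = b - 1 := by
    rw [h1δ, ht_def]
    field_simp
  have hlogψ : Real.log ψ = Real.log d / (B - 1) := by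
    rw [hψ, Real.log_rpow hd0]; ring
  have hlogd0 : 0 ≤ Real.log d := Real.log_nonneg hd
  have hlogψ0 : 0 ≤ Real.log ψ := by
    rw [hlogψ]; positivity
  have hlog : Real.log 2 + 1 + Real.log ψ ≤ L := by
    have h2Eψ : 2 * Real.exp 1 * ψ ≤ 1 + δ := by
      rw [h1δ]; nlinarith
    have hle : Real.log (2 * Real.exp 1 * ψ) ≤ L :=
      Real.log_le_log (by positivity) h2Eψ
    calc Real.log 2 + 1 + Real.log ψ
        = Real.log (2 * Real.exp 1 * ψ) := by
          rw [Real.log_mul (by positivity) (by positivity),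
            Real.log_mul (by norm_num) (by positivity), Real.log_exp]
      _ ≤ L := hle
  -- key inequality
  have hkey : Real.log 2 + Real.log d ≤ t * ((1 + δ) * L - δ) := by
    have hδeq : t * δ = (b - 1) - t := by
      have : t * (1 + δ) = t + t * δ := by ring
      linarith
    have hexp : t * ((1 + δ) * L - δ) = (b - 1) * L - (b - 1) + t := by
      have e1 : t * ((1 + δ) * L - δ) = (t * (1 + δ)) * L - t * δ := by ring
      rw [e1, htδ, hδeq]; ring
    rw [hexp]
    have hb1 : (1:ℝ) ≤ b - 1 := by linarith
    have h1 : (b - 1) * (Real.log 2 + 1 + Real.log ψ) ≤ (b - 1) * L :=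
      mul_le_mul_of_nonneg_left hlog (by linarith)
    have h2 : Real.log d ≤ (b - 1) * Real.log ψ := by
      have e2 : (B - 1) * Real.log ψ = Real.log d := by
        rw [hlogψ]; field_simp
      have : (B - 1) * Real.log ψ ≤ (b - 1) * Real.log ψ :=
        mul_le_mul_of_nonneg_right (by linarith) hlogψ0
      linarith
    have h3 : Real.log 2 ≤ (b - 1) * Real.log 2 := by
      nlinarith [Real.log_nonneg (show (1:ℝ) ≤ 2 by norm_num)]
    nlinarith [h1, h2, h3, ht0]
  -- rewrite everything via exp
  rw [Real.rpow_def_of_pos hδpos, ← Real.exp_sub, ← Real.exp_mul]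
  have hrhs : 1 / (2 * d) = Real.exp (-(Real.log 2 + Real.log d)) := by
    rw [← Real.log_mul (by norm_num) hd0.ne', Real.exp_neg, Real.exp_log (by positivity)]
    rw [one_div]
  rw [hrhs, Real.exp_le_exp]
  have e3 : (δ - L * (1 + δ)) * t = -(t * ((1 + δ) * L - δ)) := by ring
  rw [e3]
  linarith
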